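/- For each i ∈ {1, 3, 5} there exists a sequence of nonnegative reals c₀, c₁, c₂, … such that for every complex t with |t| < 2−√3 one has a_i(t) = ∑_{k=0}^∞ (−1)^k·c_k·t^{2k+1}, the series converging absolutely. In particular the Maclaurin coefficients of each a_i alternate in sign, and the series converge absolutely for |βJ| < arctan(2−√3) = π/12 when t = tanh(βJ). -/

import Mathlib

open scoped BigOperators

/-- Coefficient `a₁(t)` for complex `t`. -/
noncomputable def a1C (t : ℂ) : ℂ :=
  t * (1 + 16 * t ^ 2 + 46 * t ^ 4 + 16 * t ^ 6 + t ^ 8) /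
    ((1 + t ^ 2) * (1 + 6 * t ^ 2 + t ^ 4) * (1 + 14 * t ^ 2 + t ^ 4))

/-- Coefficient `a₃(t)` for complex `t`. -/
noncomputable def a3C (t : ℂ) : ℂ :=
  -2 * t ^ 3 / ((1 + t ^ 2) * (1 + 14 * t ^ 2 + t ^ 4))

/-- Coefficient `a₅(t)` for complex `t`. -/
noncomputable def a5C (t : ℂ) : ℂ :=
  16 * t ^ 5 / ((1 + t ^ 2) * (1 + 6 * t ^ 2 + t ^ 4) * (1 + 14 * t ^ 2 + t ^ 4))

noncomputable section AltAux

namespace AltAux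

lemma hq2 : Real.sqrt 2 ^ 2 = 2 := Real.sq_sqrt (by norm_num)
lemma hq3 : Real.sqrt 3 ^ 2 = 3 := Real.sq_sqrt (by norm_num)
lemma q2nn : 0 ≤ Real.sqrt 2 := Real.sqrt_nonneg 2
lemma q3nn : 0 ≤ Real.sqrt 3 := Real.sqrt_nonneg 3
lemma g1nn : (0:ℝ) ≤ 3 + 2 * Real.sqrt 2 := by nlinarith [q2nn]
lemma g2nn : (0:ℝ) ≤ 3 - 2 * Real.sqrt 2 := by nlinarith [hq2, q2nn]
lemma g3nn : (0:ℝ) ≤ 7 + 4 * Real.sqrt 3 := by nlinarith [q3nn]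
lemma g4nn : (0:ℝ) ≤ 7 - 4 * Real.sqrt 3 := by nlinarith [hq3, q3nn]
lemma g1le : (3 + 2 * Real.sqrt 2 : ℝ) ≤ 7 + 4 * Real.sqrt 3 := by nlinarith [hq2, q2nn, q3nn]
lemma g2le : (3 - 2 * Real.sqrt 2 : ℝ) ≤ 7 + 4 * Real.sqrt 3 := by nlinarith [q2nn, q3nn]
lemma g4le : (7 - 4 * Real.sqrt 3 : ℝ) ≤ 7 + 4 * Real.sqrt 3 := by nlinarith [q3nn]
lemma g3ge1 : (1:ℝ) ≤ 7 + 4 * Real.sqrt 3 := by nlinarith [q3nn]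

lemma hc2 : ((Real.sqrt 2 : ℝ) : ℂ) ^ 2 = 2 := by
  rw [← Complex.ofReal_pow, hq2]; norm_num
lemma hc3 : ((Real.sqrt 3 : ℝ) : ℂ) ^ 2 = 3 := by
  rw [← Complex.ofReal_pow, hq3]; norm_num

/-- arctan (2 - √3) = π/12 -/
lemma harctan : Real.arctan (2 - Real.sqrt 3) = Real.pi / 12 := by
  have h1 : Real.tan (Real.pi / 12) = 2 - Real.sqrt 3 := by
    have h12 : Real.pi / 12 = Real.pi / 3 - Real.pi / 4 := by ring
    rw [h12, Real.tan_eq_sin_div_cos, Real.sin_sub, Real.cos_sub,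
      Real.sin_pi_div_three, Real.cos_pi_div_three, Real.sin_pi_div_four, Real.cos_pi_div_four]
    have hden : 1 / 2 * (Real.sqrt 2 / 2) + Real.sqrt 3 / 2 * (Real.sqrt 2 / 2) ≠ 0 := by
      positivity
    rw [div_eq_iff hden]
    linear_combination (Real.sqrt 2 / 4) * hq3
  rw [← h1, Real.arctan_tan]
  · nlinarith [Real.pi_pos]
  · nlinarith [Real.pi_pos]

lemma pi12lt : Real.pi / 12 < 2 - Real.sqrt 3 := by
  nlinarith [Real.pi_lt_d2, hq3, q3nn]

/-- sinh x ≤ x cosh x for x ≥ 0 -/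
lemma sinh_le_mul_cosh {x : ℝ} (hx : 0 ≤ x) : Real.sinh x ≤ x * Real.cosh x := by
  have mono : MonotoneOn (fun y : ℝ => y * Real.cosh y - Real.sinh y) (Set.Ici 0) := by
    have hd : ∀ y : ℝ, HasDerivAt (fun y : ℝ => y * Real.cosh y - Real.sinh y)
        (y * Real.sinh y) y := by
      intro y
      have h1 := (hasDerivAt_id y).mul (Real.hasDerivAt_cosh y)
      have h2 := h1.sub (Real.hasDerivAt_sinh y)
      rw [show y * Real.sinh y = 1 * Real.cosh y + id y * Real.sinh y - Real.cosh y by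
        simp only [id_eq]; ring]
      exact h2
    apply monotoneOn_of_deriv_nonneg (convex_Ici 0)
    · exact (Continuous.continuousOn (by continuity))
    · intro y hy
      exact (hd y).differentiableAt.differentiableWithinAt
    · intro y hy
      rw [interior_Ici] at hy
      rw [(hd y).deriv]
      exact mul_nonneg hy.le (Real.sinh_nonneg_iff.2 hy.le)
  have := mono (Set.self_mem_Ici) (Set.mem_Ici.2 hx) hx
  simp at this
  linarith

/-- |tanh K| ≤ |K| -/
lemma abs_tanh_le (K : ℝ) : |Real.tanh K| ≤ |K| := by
  rw [Real.tanh_eq_sinh_div_cosh, abs_div, Real.abs_sinh,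
    abs_of_pos (Real.cosh_pos K)]
  rw [div_le_iff₀ (Real.cosh_pos K)]
  rw [← Real.cosh_abs K]
  exact sinh_le_mul_cosh (abs_nonneg K)

lemma tanh_bound {K : ℝ} (hK : |K| < Real.arctan (2 - Real.sqrt 3)) :
    ‖((Real.tanh K : ℝ) : ℂ)‖ < 2 - Real.sqrt 3 := by
  rw [Complex.norm_real, Real.norm_eq_abs]
  calc |Real.tanh K| ≤ |K| := abs_tanh_le K
    _ < Real.pi / 12 := by rwa [harctan] at hK
    _ < 2 - Real.sqrt 3 := pi12lt

/-- γ |t|² < 1 for 0 ≤ γ ≤ 7+4√3 and |t| < 2-√3. -/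
lemma gbound {t : ℂ} (ht : ‖t‖ < 2 - Real.sqrt 3) {γ : ℝ}
    (h0 : 0 ≤ γ) (h1 : γ ≤ 7 + 4 * Real.sqrt 3) : γ * ‖t‖ ^ 2 < 1 := by
  have h2 : ‖t‖ ^ 2 < (2 - Real.sqrt 3) ^ 2 := by
    have := norm_nonneg t
    nlinarith [hq3, q3nn]
  have h3 : (7 + 4 * Real.sqrt 3) * (2 - Real.sqrt 3) ^ 2 = 1 := by
    linear_combination (4 * Real.sqrt 3 - 9) * hq3
  have h4 : 0 < 7 + 4 * Real.sqrt 3 := by nlinarith [q3nn]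
  calc γ * ‖t‖ ^ 2 ≤ (7 + 4 * Real.sqrt 3) * ‖t‖ ^ 2 :=
        mul_le_mul_of_nonneg_right h1 (by positivity)
    _ < (7 + 4 * Real.sqrt 3) * (2 - Real.sqrt 3) ^ 2 := mul_lt_mul_of_pos_left h2 h4
    _ = 1 := h3

/-- nonvanishing of 1 + γ t² -/
lemma dne {t : ℂ} {γ : ℝ} (h0 : 0 ≤ γ) (h : γ * ‖t‖ ^ 2 < 1) :
    (1 : ℂ) + (γ : ℂ) * t ^ 2 ≠ 0 := by
  intro hc
  have h1 : (γ : ℂ) * t ^ 2 = -1 := by linear_combination hc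
  have h2 : ‖(γ : ℂ) * t ^ 2‖ = 1 := by rw [h1]; simp
  rw [norm_mul, norm_pow, Complex.norm_real, Real.norm_eq_abs, abs_of_nonneg h0] at h2
  rw [h2] at h
  exact lt_irrefl 1 h

/-- geometric piece -/
lemma geom_piece (A : ℝ) {γ : ℝ} (h0 : 0 ≤ γ) {t : ℂ} (h : γ * ‖t‖ ^ 2 < 1) :
    HasSum (fun k : ℕ => ((A : ℂ) * t) * ((-(γ : ℂ)) * t ^ 2) ^ k)
      ((A : ℂ) * t / (1 + (γ : ℂ) * t ^ 2)) := by
  have hn : ‖(-(γ : ℂ)) * t ^ 2‖ < 1 := by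
    rw [norm_mul, norm_neg, norm_pow]
    simpa [abs_of_nonneg h0] using h
  have hg := (hasSum_geometric_of_norm_lt_one hn).mul_left ((A : ℂ) * t)
  rw [show (A : ℂ) * t / (1 + (γ : ℂ) * t ^ 2) = (A : ℂ) * t * (1 - -(γ : ℂ) * t ^ 2)⁻¹ by
    rw [div_eq_mul_inv]; congr 2; ring]
  exact hg

/-- master HasSum -/
lemma master (B0 B1 B2 B3 B4 : ℝ) {t : ℂ} (ht : ‖t‖ < 2 - Real.sqrt 3) :
    HasSum (fun k : ℕ =>
      ((-1) ^ k * ((B0 + B1 * (3 + 2 * Real.sqrt 2) ^ k + B2 * (3 - 2 * Real.sqrt 2) ^ k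
        + B3 * (7 + 4 * Real.sqrt 3) ^ k + B4 * (7 - 4 * Real.sqrt 3) ^ k : ℝ) : ℂ))
        * t ^ (2 * k + 1))
      ((B0 : ℂ) * t / (1 + ((1 : ℝ) : ℂ) * t ^ 2)
        + (B1 : ℂ) * t / (1 + ((3 + 2 * Real.sqrt 2 : ℝ) : ℂ) * t ^ 2)
        + (B2 : ℂ) * t / (1 + ((3 - 2 * Real.sqrt 2 : ℝ) : ℂ) * t ^ 2)
        + (B3 : ℂ) * t / (1 + ((7 + 4 * Real.sqrt 3 : ℝ) : ℂ) * t ^ 2)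
        + (B4 : ℂ) * t / (1 + ((7 - 4 * Real.sqrt 3 : ℝ) : ℂ) * t ^ 2)) := by
  have hb0 := gbound ht zero_le_one (by exact g3ge1)
  have hb1 := gbound ht g1nn g1le
  have hb2 := gbound ht g2nn g2le
  have hb3 := gbound ht g3nn (le_refl _)
  have hb4 := gbound ht g4nn g4le
  have s0 := geom_piece B0 zero_le_one hb0
  have s1 := geom_piece B1 g1nn hb1
  have s2 := geom_piece B2 g2nn hb2
  have s3 := geom_piece B3 g3nn hb3
  have s4 := geom_piece B4 g4nn hb4
  have hs := (((s0.add s1).add s2).add s3).add s4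
  have hfun : (fun k : ℕ =>
      ((-1) ^ k * ((B0 + B1 * (3 + 2 * Real.sqrt 2) ^ k + B2 * (3 - 2 * Real.sqrt 2) ^ k
        + B3 * (7 + 4 * Real.sqrt 3) ^ k + B4 * (7 - 4 * Real.sqrt 3) ^ k : ℝ) : ℂ))
        * t ^ (2 * k + 1)) = (fun k : ℕ =>
      ((B0 : ℂ) * t) * ((-((1:ℝ) : ℂ)) * t ^ 2) ^ k
        + ((B1 : ℂ) * t) * ((-(((3 + 2 * Real.sqrt 2 : ℝ)) : ℂ)) * t ^ 2) ^ k
        + ((B2 : ℂ) * t) * ((-(((3 - 2 * Real.sqrt 2 : ℝ)) : ℂ)) * t ^ 2) ^ k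
        + ((B3 : ℂ) * t) * ((-(((7 + 4 * Real.sqrt 3 : ℝ)) : ℂ)) * t ^ 2) ^ k
        + ((B4 : ℂ) * t) * ((-(((7 - 4 * Real.sqrt 3 : ℝ)) : ℂ)) * t ^ 2) ^ k) := by
    funext k
    have key : ∀ x : ℂ, (-x * t ^ 2) ^ k = (-1 : ℂ) ^ k * x ^ k * (t ^ 2) ^ k := by
      intro x
      rw [show -x * t ^ 2 = (-1) * (x * t ^ 2) by ring, mul_pow, mul_pow]
      ring
    rw [key, key, key, key, key]
    push_cast
    ring
  rw [hfun]
  exact hs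

/-- master absolute summability -/
lemma masterAbs {c : ℕ → ℝ} (hc0 : ∀ k, 0 ≤ c k)
    (hc : ∀ k, c k ≤ 3 * (7 + 4 * Real.sqrt 3) ^ k) {t : ℂ}
    (ht : ‖t‖ < 2 - Real.sqrt 3) :
    Summable fun k : ℕ => ‖((-1) ^ k * ((c k : ℝ) : ℂ)) * t ^ (2 * k + 1)‖ := by
  have hb3 := gbound ht g3nn (le_refl _)
  have hg : Summable fun k : ℕ =>
      (3 * ‖t‖) * ((7 + 4 * Real.sqrt 3) * ‖t‖ ^ 2) ^ k := by
    apply Summable.mul_left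
    exact summable_geometric_of_lt_one (by positivity) hb3
  apply Summable.of_nonneg_of_le (fun k => norm_nonneg _) _ hg
  intro k
  calc ‖((-1) ^ k * ((c k : ℝ) : ℂ)) * t ^ (2 * k + 1)‖
      = c k * ‖t‖ ^ (2 * k + 1) := by
        simp [norm_mul, norm_pow, abs_of_nonneg (hc0 k)]
    _ ≤ (3 * (7 + 4 * Real.sqrt 3) ^ k) * ‖t‖ ^ (2 * k + 1) :=
        mul_le_mul_of_nonneg_right (hc k) (by positivity)
    _ = (3 * ‖t‖) * ((7 + 4 * Real.sqrt 3) * ‖t‖ ^ 2) ^ k := by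
        rw [mul_pow, pow_add, pow_mul, pow_one]
        ring

/-- product identities -/
lemma hd2 (t : ℂ) : (1 + (3 + 2 * ((Real.sqrt 2 : ℝ) : ℂ)) * t ^ 2) *
    (1 + (3 - 2 * ((Real.sqrt 2 : ℝ) : ℂ)) * t ^ 2) = 1 + 6 * t ^ 2 + t ^ 4 := by
  linear_combination (-4 * t ^ 4) * hc2

lemma hd3 (t : ℂ) : (1 + (7 + 4 * ((Real.sqrt 3 : ℝ) : ℂ)) * t ^ 2) *
    (1 + (7 - 4 * ((Real.sqrt 3 : ℝ) : ℂ)) * t ^ 2) = 1 + 14 * t ^ 2 + t ^ 4 := by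
  linear_combination (-16 * t ^ 4) * hc3

/-- pair sum for the √2 pair -/
lemma pair2 {t : ℂ} (h1 : 1 + (3 + 2 * ((Real.sqrt 2 : ℝ) : ℂ)) * t ^ 2 ≠ 0)
    (h2 : 1 + (3 - 2 * ((Real.sqrt 2 : ℝ) : ℂ)) * t ^ 2 ≠ 0) :
    ((2 + ((Real.sqrt 2 : ℝ) : ℂ)) / 8) * t / (1 + (3 + 2 * ((Real.sqrt 2 : ℝ) : ℂ)) * t ^ 2)
      + ((2 - ((Real.sqrt 2 : ℝ) : ℂ)) / 8) * t / (1 + (3 - 2 * ((Real.sqrt 2 : ℝ) : ℂ)) * t ^ 2)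
      = t * (1 + t ^ 2) / (2 * (1 + 6 * t ^ 2 + t ^ 4)) := by
  have h6 : (1 : ℂ) + 6 * t ^ 2 + t ^ 4 ≠ 0 := by rw [← hd2 t]; exact mul_ne_zero h1 h2
  rw [div_add_div _ _ h1 h2, hd2 t, div_eq_div_iff h6 (by exact mul_ne_zero two_ne_zero h6)]
  linear_combination (-(t ^ 3) * (1 + 6 * t ^ 2 + t ^ 4)) * hc2

/-- pair sum for the √3 pair -/
lemma pair3 {t : ℂ} (h1 : 1 + (7 + 4 * ((Real.sqrt 3 : ℝ) : ℂ)) * t ^ 2 ≠ 0)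
    (h2 : 1 + (7 - 4 * ((Real.sqrt 3 : ℝ) : ℂ)) * t ^ 2 ≠ 0) :
    ((2 + ((Real.sqrt 3 : ℝ) : ℂ)) / 24) * t / (1 + (7 + 4 * ((Real.sqrt 3 : ℝ) : ℂ)) * t ^ 2)
      + ((2 - ((Real.sqrt 3 : ℝ) : ℂ)) / 24) * t / (1 + (7 - 4 * ((Real.sqrt 3 : ℝ) : ℂ)) * t ^ 2)
      = t * (1 + t ^ 2) / (6 * (1 + 14 * t ^ 2 + t ^ 4)) := by
  have h6 : (1 : ℂ) + 14 * t ^ 2 + t ^ 4 ≠ 0 := by rw [← hd3 t]; exact mul_ne_zero h1 h2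
  rw [div_add_div _ _ h1 h2, hd3 t, div_eq_div_iff h6 (by
    exact mul_ne_zero (by norm_num) h6)]
  linear_combination (-2 * t ^ 3 * (1 + 14 * t ^ 2 + t ^ 4)) * hc3

/-- coefficient sequences -/
def cc1 : ℕ → ℝ := fun k => 1/3 + (2 + Real.sqrt 2)/8 * (3 + 2 * Real.sqrt 2)^k
  + (2 - Real.sqrt 2)/8 * (3 - 2 * Real.sqrt 2)^k
  + (2 + Real.sqrt 3)/24 * (7 + 4 * Real.sqrt 3)^k
  + (2 - Real.sqrt 3)/24 * (7 - 4 * Real.sqrt 3)^k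

def cc3 : ℕ → ℝ := fun k => -(1/6) + 0 * (3 + 2 * Real.sqrt 2)^k
  + 0 * (3 - 2 * Real.sqrt 2)^k
  + (2 + Real.sqrt 3)/24 * (7 + 4 * Real.sqrt 3)^k
  + (2 - Real.sqrt 3)/24 * (7 - 4 * Real.sqrt 3)^k

def cc5 : ℕ → ℝ := fun k => 1/3 + (-((2 + Real.sqrt 2)/8)) * (3 + 2 * Real.sqrt 2)^k
  + (-((2 - Real.sqrt 2)/8)) * (3 - 2 * Real.sqrt 2)^k
  + (2 + Real.sqrt 3)/24 * (7 + 4 * Real.sqrt 3)^k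
  + (2 - Real.sqrt 3)/24 * (7 - 4 * Real.sqrt 3)^k

lemma b1nn : (0:ℝ) ≤ (2 + Real.sqrt 2)/8 := by nlinarith [q2nn]
lemma b2nn : (0:ℝ) ≤ (2 - Real.sqrt 2)/8 := by nlinarith [hq2, q2nn]
lemma b3nn : (0:ℝ) ≤ (2 + Real.sqrt 3)/24 := by nlinarith [q3nn]
lemma b4nn : (0:ℝ) ≤ (2 - Real.sqrt 3)/24 := by nlinarith [hq3, q3nn]

lemma cc1_nonneg (k : ℕ) : 0 ≤ cc1 k := by
  have p1 := pow_nonneg g1nn k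
  have p2 := pow_nonneg g2nn k
  have p3 := pow_nonneg g3nn k
  have p4 := pow_nonneg g4nn k
  have := mul_nonneg b1nn p1
  have := mul_nonneg b2nn p2
  have := mul_nonneg b3nn p3
  have := mul_nonneg b4nn p4
  unfold cc1; linarith

lemma cc3_nonneg (k : ℕ) : 0 ≤ cc3 k := by
  unfold cc3
  rcases Nat.eq_zero_or_pos k with hk | hk
  · subst hk
    simp only [pow_zero, mul_one]
    ring_nf
    nlinarith [hq3]
  · have hp : (7 + 4 * Real.sqrt 3 : ℝ) ≤ (7 + 4 * Real.sqrt 3)^k :=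
      le_self_pow₀ g3ge1 (Nat.pos_iff_ne_zero.mp hk)
    have h1 : (2 + Real.sqrt 3)/24 * (7 + 4 * Real.sqrt 3) ≤
        (2 + Real.sqrt 3)/24 * (7 + 4 * Real.sqrt 3)^k :=
      mul_le_mul_of_nonneg_left hp b3nn
    have h2 := mul_nonneg b4nn (pow_nonneg g4nn k)
    nlinarith [hq3, q3nn]

lemma key_pow {k : ℕ} (hk : 2 ≤ k) :
    4 * (3 + 2 * Real.sqrt 2)^k ≤ (7 + 4 * Real.sqrt 3)^k := by
  obtain ⟨m, rfl⟩ := Nat.exists_eq_add_of_le hk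
  have e1 : (3 + 2 * Real.sqrt 2 : ℝ)^m ≤ (7 + 4 * Real.sqrt 3)^m :=
    pow_le_pow_left₀ g1nn g1le m
  have e2 : 4 * (3 + 2 * Real.sqrt 2 : ℝ)^2 ≤ (7 + 4 * Real.sqrt 3)^2 := by
    nlinarith [hq2, hq3, q2nn, q3nn]
  calc 4 * (3 + 2 * Real.sqrt 2 : ℝ)^(2 + m)
      = (4 * (3 + 2 * Real.sqrt 2)^2) * (3 + 2 * Real.sqrt 2)^m := by rw [pow_add]; ring
    _ ≤ (7 + 4 * Real.sqrt 3)^2 * (7 + 4 * Real.sqrt 3)^m := by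
        apply mul_le_mul e2 e1 (pow_nonneg g1nn m) (by positivity)
    _ = (7 + 4 * Real.sqrt 3)^(2 + m) := by rw [pow_add]

lemma cc5_nonneg (k : ℕ) : 0 ≤ cc5 k := by
  unfold cc5
  match k, (Nat.lt_or_ge k 2) with
  | 0, _ =>
    simp only [pow_zero, mul_one]
    ring_nf
    nlinarith [hq2, hq3]
  | 1, _ =>
    simp only [pow_one]
    have h0 : 1/3 + (-((2 + Real.sqrt 2)/8)) * (3 + 2 * Real.sqrt 2)
        + (-((2 - Real.sqrt 2)/8)) * (3 - 2 * Real.sqrt 2)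
        + (2 + Real.sqrt 3)/24 * (7 + 4 * Real.sqrt 3)
        + (2 - Real.sqrt 3)/24 * (7 - 4 * Real.sqrt 3) = 0 := by
      linear_combination (-(1/2)) * hq2 + (1/3) * hq3
    linarith
  | (n + 2), _ =>
    have hk : 2 ≤ n + 2 := by omega
    have hkey := key_pow hk
    have hmain : (2 + Real.sqrt 2)/8 * (3 + 2 * Real.sqrt 2)^(n+2)
        ≤ (2 + Real.sqrt 3)/24 * (7 + 4 * Real.sqrt 3)^(n+2) := by
      have h1 : (2 + Real.sqrt 2)/8 ≤ (2 + Real.sqrt 3)/24 * 4 := by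
        nlinarith [hq2, hq3, q2nn, q3nn]
      calc (2 + Real.sqrt 2)/8 * (3 + 2 * Real.sqrt 2)^(n+2)
          ≤ ((2 + Real.sqrt 3)/24 * 4) * (3 + 2 * Real.sqrt 2)^(n+2) :=
            mul_le_mul_of_nonneg_right h1 (pow_nonneg g1nn _)
        _ = (2 + Real.sqrt 3)/24 * (4 * (3 + 2 * Real.sqrt 2)^(n+2)) := by ring
        _ ≤ (2 + Real.sqrt 3)/24 * (7 + 4 * Real.sqrt 3)^(n+2) :=
            mul_le_mul_of_nonneg_left hkey b3nn
    have hsmall : (2 - Real.sqrt 2)/8 * (3 - 2 * Real.sqrt 2)^(n+2) ≤ 1/3 := by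
      have h2 : (3 - 2 * Real.sqrt 2 : ℝ) ≤ 1 := by nlinarith [hq2, q2nn]
      have h3 : (3 - 2 * Real.sqrt 2 : ℝ)^(n+2) ≤ 1 := pow_le_one₀ g2nn h2
      nlinarith [hq2, q2nn, pow_nonneg g2nn (n+2)]
    have h4 := mul_nonneg b4nn (pow_nonneg g4nn (n+2))
    linarith

lemma cc_le (B0 B1 B2 B3 B4 : ℝ) (h0 : |B0| ≤ 1/2) (h1 : |B1| ≤ 1/2) (h2 : |B2| ≤ 1/2)
    (h3 : |B3| ≤ 1/2) (h4 : |B4| ≤ 1/2) (k : ℕ) :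
    B0 + B1 * (3 + 2 * Real.sqrt 2)^k + B2 * (3 - 2 * Real.sqrt 2)^k
      + B3 * (7 + 4 * Real.sqrt 3)^k + B4 * (7 - 4 * Real.sqrt 3)^k
      ≤ 3 * (7 + 4 * Real.sqrt 3)^k := by
  have p1 := pow_le_pow_left₀ g1nn g1le k
  have p2 := pow_le_pow_left₀ g2nn g2le k
  have p4 := pow_le_pow_left₀ g4nn g4le k
  have p3 := pow_nonneg g3nn k
  have q1 := pow_nonneg g1nn k
  have q2 := pow_nonneg g2nn k
  have q4 := pow_nonneg g4nn k
  have p0 : (1:ℝ) ≤ (7 + 4 * Real.sqrt 3)^k := one_le_pow₀ g3ge1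
  have e0 : B0 ≤ 1/2 * (7 + 4 * Real.sqrt 3)^k := by
    calc B0 ≤ |B0| := le_abs_self _
      _ ≤ 1/2 := h0
      _ ≤ 1/2 * (7 + 4 * Real.sqrt 3)^k := by linarith
  have key : ∀ B g : ℝ, |B| ≤ 1/2 → 0 ≤ g → g ≤ (7 + 4 * Real.sqrt 3)^k →
      B * g ≤ 1/2 * (7 + 4 * Real.sqrt 3)^k := by
    intro B g hB hg hgle
    calc B * g ≤ |B| * g := mul_le_mul_of_nonneg_right (le_abs_self _) hg
      _ ≤ 1/2 * (7 + 4 * Real.sqrt 3)^k := mul_le_mul hB hgle hg (by norm_num)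
  have e1 := key _ _ h1 q1 p1
  have e2 := key _ _ h2 q2 p2
  have e3 := key _ _ h3 p3 (le_refl _)
  have e4 := key _ _ h4 q4 p4
  linarith

lemma babs_b1 : |(2 + Real.sqrt 2)/8| ≤ (1:ℝ)/2 := by
  rw [abs_of_nonneg b1nn]; nlinarith [hq2, q2nn]
lemma babs_b2 : |(2 - Real.sqrt 2)/8| ≤ (1:ℝ)/2 := by
  rw [abs_of_nonneg b2nn]; nlinarith [q2nn]
lemma babs_b3 : |(2 + Real.sqrt 3)/24| ≤ (1:ℝ)/2 := by
  rw [abs_of_nonneg b3nn]; nlinarith [hq3, q3nn]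
lemma babs_b4 : |(2 - Real.sqrt 3)/24| ≤ (1:ℝ)/2 := by
  rw [abs_of_nonneg b4nn]; nlinarith [q3nn]

lemma cc1_le (k : ℕ) : cc1 k ≤ 3 * (7 + 4 * Real.sqrt 3)^k := by
  unfold cc1
  exact cc_le _ _ _ _ _ (by rw [abs_of_nonneg] <;> norm_num) babs_b1 babs_b2 babs_b3 babs_b4 k

lemma cc3_le (k : ℕ) : cc3 k ≤ 3 * (7 + 4 * Real.sqrt 3)^k := by
  unfold cc3
  exact cc_le _ _ _ _ _ (by rw [abs_neg, abs_of_nonneg] <;> norm_num)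
    (by norm_num) (by norm_num) babs_b3 babs_b4 k

lemma cc5_le (k : ℕ) : cc5 k ≤ 3 * (7 + 4 * Real.sqrt 3)^k := by
  unfold cc5
  exact cc_le _ _ _ _ _ (by rw [abs_of_nonneg] <;> norm_num)
    (by rw [abs_neg]; exact babs_b1) (by rw [abs_neg]; exact babs_b2) babs_b3 babs_b4 k

/-- negated √2 pair -/
lemma pair2neg {t : ℂ} (h1 : 1 + (3 + 2 * ((Real.sqrt 2 : ℝ) : ℂ)) * t ^ 2 ≠ 0)
    (h2 : 1 + (3 - 2 * ((Real.sqrt 2 : ℝ) : ℂ)) * t ^ 2 ≠ 0) :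
    (-((2 + ((Real.sqrt 2 : ℝ) : ℂ)) / 8)) * t / (1 + (3 + 2 * ((Real.sqrt 2 : ℝ) : ℂ)) * t ^ 2)
      + (-((2 - ((Real.sqrt 2 : ℝ) : ℂ)) / 8)) * t /
          (1 + (3 - 2 * ((Real.sqrt 2 : ℝ) : ℂ)) * t ^ 2)
      = -(t * (1 + t ^ 2) / (2 * (1 + 6 * t ^ 2 + t ^ 4))) := by
  linear_combination -(pair2 h1 h2)

lemma hrearr (A B C D E : ℂ) : A + B + C + D + E = A + (B + C) + (D + E) := by ring

section Mains

variable {t : ℂ}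

lemma nonzeros (ht : ‖t‖ < 2 - Real.sqrt 3) :
    (1 + t ^ 2 ≠ 0) ∧ (1 + (3 + 2 * ((Real.sqrt 2 : ℝ) : ℂ)) * t ^ 2 ≠ 0)
      ∧ (1 + (3 - 2 * ((Real.sqrt 2 : ℝ) : ℂ)) * t ^ 2 ≠ 0)
      ∧ (1 + (7 + 4 * ((Real.sqrt 3 : ℝ) : ℂ)) * t ^ 2 ≠ 0)
      ∧ (1 + (7 - 4 * ((Real.sqrt 3 : ℝ) : ℂ)) * t ^ 2 ≠ 0) := by
  have n0 := dne zero_le_one (gbound ht zero_le_one g3ge1)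
  have n1 := dne g1nn (gbound ht g1nn g1le)
  have n2 := dne g2nn (gbound ht g2nn g2le)
  have n3 := dne g3nn (gbound ht g3nn (le_refl _))
  have n4 := dne g4nn (gbound ht g4nn g4le)
  refine ⟨?_, ?_, ?_, ?_, ?_⟩
  · simpa using n0
  · have : ((3 + 2 * Real.sqrt 2 : ℝ) : ℂ) = 3 + 2 * ((Real.sqrt 2 : ℝ) : ℂ) := by push_cast; ring
    rwa [this] at n1
  · have : ((3 - 2 * Real.sqrt 2 : ℝ) : ℂ) = 3 - 2 * ((Real.sqrt 2 : ℝ) : ℂ) := by push_cast; ring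
    rwa [this] at n2
  · have : ((7 + 4 * Real.sqrt 3 : ℝ) : ℂ) = 7 + 4 * ((Real.sqrt 3 : ℝ) : ℂ) := by push_cast; ring
    rwa [this] at n3
  · have : ((7 - 4 * Real.sqrt 3 : ℝ) : ℂ) = 7 - 4 * ((Real.sqrt 3 : ℝ) : ℂ) := by push_cast; ring
    rwa [this] at n4

lemma main1 (t : ℂ) (ht : ‖t‖ < 2 - Real.sqrt 3) :
    (Summable fun k : ℕ => ‖((-1) ^ k * ((cc1 k : ℝ) : ℂ)) * t ^ (2 * k + 1)‖) ∧
    HasSum (fun k : ℕ => ((-1) ^ k * ((cc1 k : ℝ) : ℂ)) * t ^ (2 * k + 1)) (a1C t) := by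
  obtain ⟨n0, n1, n2, n3, n4⟩ := nonzeros ht
  have h6 : (1 : ℂ) + 6 * t ^ 2 + t ^ 4 ≠ 0 := by rw [← hd2 t]; exact mul_ne_zero n1 n2
  have h14 : (1 : ℂ) + 14 * t ^ 2 + t ^ 4 ≠ 0 := by rw [← hd3 t]; exact mul_ne_zero n3 n4
  refine ⟨masterAbs cc1_nonneg cc1_le ht, ?_⟩
  have hm := master (1/3) ((2 + Real.sqrt 2)/8) ((2 - Real.sqrt 2)/8)
    ((2 + Real.sqrt 3)/24) ((2 - Real.sqrt 3)/24) ht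
  have hval : (((1/3 : ℝ)) : ℂ) * t / (1 + ((1 : ℝ) : ℂ) * t ^ 2)
      + (((2 + Real.sqrt 2)/8 : ℝ) : ℂ) * t / (1 + ((3 + 2 * Real.sqrt 2 : ℝ) : ℂ) * t ^ 2)
      + (((2 - Real.sqrt 2)/8 : ℝ) : ℂ) * t / (1 + ((3 - 2 * Real.sqrt 2 : ℝ) : ℂ) * t ^ 2)
      + (((2 + Real.sqrt 3)/24 : ℝ) : ℂ) * t / (1 + ((7 + 4 * Real.sqrt 3 : ℝ) : ℂ) * t ^ 2)
      + (((2 - Real.sqrt 3)/24 : ℝ) : ℂ) * t / (1 + ((7 - 4 * Real.sqrt 3 : ℝ) : ℂ) * t ^ 2)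
      = a1C t := by
    push_cast
    rw [hrearr, pair2 n1 n2, pair3 n3 n4]
    unfold a1C
    have h14' : (1:ℂ) + t ^ 2 * 14 + t ^ 4 ≠ 0 := by convert h14 using 1; ring
    have h6' : (1:ℂ) + t ^ 2 * 6 + t ^ 4 ≠ 0 := by convert (mul_ne_zero n1 n2 : _) using 1; rw [hd2 t]; ring
    field_simp
    ring
  rw [hval] at hm
  simp only [cc1]
  exact hm

lemma main3 (t : ℂ) (ht : ‖t‖ < 2 - Real.sqrt 3) :
    (Summable fun k : ℕ => ‖((-1) ^ k * ((cc3 k : ℝ) : ℂ)) * t ^ (2 * k + 1)‖) ∧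
    HasSum (fun k : ℕ => ((-1) ^ k * ((cc3 k : ℝ) : ℂ)) * t ^ (2 * k + 1)) (a3C t) := by
  obtain ⟨n0, n1, n2, n3, n4⟩ := nonzeros ht
  have h14 : (1 : ℂ) + 14 * t ^ 2 + t ^ 4 ≠ 0 := by rw [← hd3 t]; exact mul_ne_zero n3 n4
  refine ⟨masterAbs cc3_nonneg cc3_le ht, ?_⟩
  have hm := master (-(1/6)) 0 0 ((2 + Real.sqrt 3)/24) ((2 - Real.sqrt 3)/24) ht
  have hval : (((-(1/6) : ℝ)) : ℂ) * t / (1 + ((1 : ℝ) : ℂ) * t ^ 2)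
      + ((0 : ℝ) : ℂ) * t / (1 + ((3 + 2 * Real.sqrt 2 : ℝ) : ℂ) * t ^ 2)
      + ((0 : ℝ) : ℂ) * t / (1 + ((3 - 2 * Real.sqrt 2 : ℝ) : ℂ) * t ^ 2)
      + (((2 + Real.sqrt 3)/24 : ℝ) : ℂ) * t / (1 + ((7 + 4 * Real.sqrt 3 : ℝ) : ℂ) * t ^ 2)
      + (((2 - Real.sqrt 3)/24 : ℝ) : ℂ) * t / (1 + ((7 - 4 * Real.sqrt 3 : ℝ) : ℂ) * t ^ 2)
      = a3C t := by
    push_cast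
    rw [hrearr, pair3 n3 n4]
    unfold a3C
    have h14' : (1:ℂ) + t ^ 2 * 14 + t ^ 4 ≠ 0 := by convert h14 using 1; ring
    have h6' : (1:ℂ) + t ^ 2 * 6 + t ^ 4 ≠ 0 := by convert (mul_ne_zero n1 n2 : _) using 1; rw [hd2 t]; ring
    field_simp
    ring
  rw [hval] at hm
  simp only [cc3]
  exact hm

lemma main5 (t : ℂ) (ht : ‖t‖ < 2 - Real.sqrt 3) :
    (Summable fun k : ℕ => ‖((-1) ^ k * ((cc5 k : ℝ) : ℂ)) * t ^ (2 * k + 1)‖) ∧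
    HasSum (fun k : ℕ => ((-1) ^ k * ((cc5 k : ℝ) : ℂ)) * t ^ (2 * k + 1)) (a5C t) := by
  obtain ⟨n0, n1, n2, n3, n4⟩ := nonzeros ht
  have h6 : (1 : ℂ) + 6 * t ^ 2 + t ^ 4 ≠ 0 := by rw [← hd2 t]; exact mul_ne_zero n1 n2
  have h14 : (1 : ℂ) + 14 * t ^ 2 + t ^ 4 ≠ 0 := by rw [← hd3 t]; exact mul_ne_zero n3 n4
  refine ⟨masterAbs cc5_nonneg cc5_le ht, ?_⟩
  have hm := master (1/3) (-((2 + Real.sqrt 2)/8)) (-((2 - Real.sqrt 2)/8))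
    ((2 + Real.sqrt 3)/24) ((2 - Real.sqrt 3)/24) ht
  have hval : (((1/3 : ℝ)) : ℂ) * t / (1 + ((1 : ℝ) : ℂ) * t ^ 2)
      + ((-((2 + Real.sqrt 2)/8) : ℝ) : ℂ) * t / (1 + ((3 + 2 * Real.sqrt 2 : ℝ) : ℂ) * t ^ 2)
      + ((-((2 - Real.sqrt 2)/8) : ℝ) : ℂ) * t / (1 + ((3 - 2 * Real.sqrt 2 : ℝ) : ℂ) * t ^ 2)
      + (((2 + Real.sqrt 3)/24 : ℝ) : ℂ) * t / (1 + ((7 + 4 * Real.sqrt 3 : ℝ) : ℂ) * t ^ 2)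
      + (((2 - Real.sqrt 3)/24 : ℝ) : ℂ) * t / (1 + ((7 - 4 * Real.sqrt 3 : ℝ) : ℂ) * t ^ 2)
      = a5C t := by
    push_cast
    rw [hrearr, pair2neg n1 n2, pair3 n3 n4]
    unfold a5C
    have h14' : (1:ℂ) + t ^ 2 * 14 + t ^ 4 ≠ 0 := by convert h14 using 1; ring
    have h6' : (1:ℂ) + t ^ 2 * 6 + t ^ 4 ≠ 0 := by convert (mul_ne_zero n1 n2 : _) using 1; rw [hd2 t]; ring
    field_simp
    ring
  rw [hval] at hm
  simp only [cc5]
  exact hm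

end Mains

end AltAux

end AltAux


/-- each of `a₁`, `a₃`, `a₅` has a Maclaurin series
`∑ₖ (−1)ᵏ cₖ t^(2k+1)` with nonnegative `cₖ` (alternating signs), converging absolutely
for `|t| < 2 − √3`; in particular the series converge absolutely for
`|βJ| < arctan (2 − √3) = π/12` when `t = tanh (βJ)`. -/
theorem alternating_maclaurin_series (a : ℂ → ℂ) (ha : a = a1C ∨ a = a3C ∨ a = a5C) :
    Real.arctan (2 - Real.sqrt 3) = Real.pi / 12 ∧
    ∃ c : ℕ → ℝ, (∀ k, 0 ≤ c k) ∧
      (∀ t : ℂ, ‖t‖ < 2 - Real.sqrt 3 →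
        (Summable fun k : ℕ => ‖((-1) ^ k * (c k : ℂ)) * t ^ (2 * k + 1)‖) ∧
        HasSum (fun k : ℕ => ((-1) ^ k * (c k : ℂ)) * t ^ (2 * k + 1)) (a t)) ∧
      (∀ K : ℝ, |K| < Real.arctan (2 - Real.sqrt 3) →
        (Summable fun k : ℕ =>
          ‖((-1) ^ k * (c k : ℂ)) * ((Real.tanh K : ℝ) : ℂ) ^ (2 * k + 1)‖) ∧
        HasSum (fun k : ℕ => ((-1) ^ k * (c k : ℂ)) * ((Real.tanh K : ℝ) : ℂ) ^ (2 * k + 1))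
          (a ((Real.tanh K : ℝ) : ℂ))) := by
  refine ⟨AltAux.harctan, ?_⟩
  rcases ha with rfl | rfl | rfl
  · exact ⟨AltAux.cc1, AltAux.cc1_nonneg, fun t ht => AltAux.main1 t ht,
      fun K hK => AltAux.main1 _ (AltAux.tanh_bound hK)⟩
  · exact ⟨AltAux.cc3, AltAux.cc3_nonneg, fun t ht => AltAux.main3 t ht,
      fun K hK => AltAux.main3 _ (AltAux.tanh_bound hK)⟩
  · exact ⟨AltAux.cc5, AltAux.cc5_nonneg, fun t ht => AltAux.main5 t ht,
      fun K hK => AltAux.main5 _ (AltAux.tanh_bound hK)⟩
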